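/- Let n ≥ 2 and consider the points 0, 1, 2, …, n−1 on the real line. Let T be any spanning tree on these n points with the property that for every vertex v, all neighbors of v in T lie strictly on the same side of v (all greater than v or all less than v). Then the total weight of T, i.e., the sum over edges {a,b} of |a − b|, is at least 2n − 3. -/

import Mathlib

namespace OneSidedAux

variable {n : ℕ}

def lo : Sym2 (Fin n) → ℕ := Sym2.lift ⟨fun a b => min (a:ℕ) (b:ℕ), fun _ _ => min_comm _ _⟩
def hi : Sym2 (Fin n) → ℕ := Sym2.lift ⟨fun a b => max (a:ℕ) (b:ℕ), fun _ _ => max_comm _ _⟩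
@[simp] lemma lo_mk (a b : Fin n) : lo s(a,b) = min (a:ℕ) (b:ℕ) := rfl
@[simp] lemma hi_mk (a b : Fin n) : hi s(a,b) = max (a:ℕ) (b:ℕ) := rfl

lemma lo_le_hi (e : Sym2 (Fin n)) : lo e ≤ hi e := by
  induction e using Sym2.ind with
  | _ a b => simp [min_le_iff, le_max_iff]

lemma exists_rep (e : Sym2 (Fin n)) :
    ∃ a b : Fin n, e = s(a,b) ∧ (a:ℕ) = lo e ∧ (b:ℕ) = hi e := by
  induction e using Sym2.ind with
  | _ a b =>
    rcases le_total (a:ℕ) (b:ℕ) with h | h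
    · exact ⟨a, b, rfl, by simp [h], by simp [h]⟩
    · exact ⟨b, a, Sym2.eq_swap.symm, by simp [h], by simp [h]⟩

variable {T : SimpleGraph (Fin n)}

lemma exists_crossing_edge {x y : Fin n} (w : T.Walk x y) (k : ℕ)
    (hx : (x:ℕ) ≤ k) (hy : k < (y:ℕ)) :
    ∃ e ∈ w.edges, lo e ≤ k ∧ k < hi e := by
  induction w with
  | nil => omega
  | @cons u v z h p ih =>
    by_cases hv : (v:ℕ) ≤ k
    · obtain ⟨e, he, hc⟩ := ih hv hy
      exact ⟨e, List.mem_cons_of_mem _ he, hc⟩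
    · exact ⟨s(u, v), List.mem_cons_self, by simp; omega⟩

lemma parity {x y : Fin n} (w : T.Walk x y) (k : ℕ) :
    (w.edges.countP (fun e => decide (lo e ≤ k ∧ k < hi e))) % 2 =
      (if ((x:ℕ) ≤ k ↔ (y:ℕ) ≤ k) then 0 else 1) := by
  induction w with
  | nil => simp
  | @cons u v z h p ih =>
    rw [SimpleGraph.Walk.edges_cons, List.countP_cons]
    simp only [lo_mk, hi_mk, decide_eq_true_eq]
    generalize List.countP _ p.edges = c at ih ⊢
    have hd : (if decide (min (u:ℕ) v ≤ k ∧ k < max (u:ℕ) v) = true then 1 else 0) =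
        (if ((u:ℕ) ≤ k ↔ (v:ℕ) ≤ k) then 0 else 1) := by
      by_cases hu : (u:ℕ) ≤ k <;> by_cases hv : (v:ℕ) ≤ k <;> simp [hu, hv] <;> omega
    erw [hd]
    by_cases hu : (u:ℕ) ≤ k <;> by_cases hv : (v:ℕ) ≤ k <;> by_cases hz : (z:ℕ) ≤ k <;>
      simp only [hu, hv, hz, iff_self, iff_true, true_iff, iff_false, false_iff, not_true_eq_false,
        not_false_eq_true, if_true, if_false] at ih ⊢ <;> omega

lemma stays_left {x y : Fin n} (w : T.Walk x y) (k : ℕ) (hx : (x:ℕ) ≤ k)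
    (hno : ∀ e ∈ w.edges, ¬(lo e ≤ k ∧ k < hi e)) :
    ∀ v ∈ w.support, (v:ℕ) ≤ k := by
  induction w with
  | nil => intro v hv; simp at hv; subst hv; exact hx
  | @cons u v z h p ih =>
    intro a ha
    rw [SimpleGraph.Walk.support_cons, List.mem_cons] at ha
    have hv : (v:ℕ) ≤ k := by
      have := hno s(u,v) (List.mem_cons_self)
      simp at this; omega
    rcases ha with rfl | ha
    · exact hx
    · exact ih hv (fun e he => hno e (List.mem_cons_of_mem _ he)) a ha

lemma stays_right {x y : Fin n} (w : T.Walk x y) (k : ℕ) (hx : k < (x:ℕ))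
    (hno : ∀ e ∈ w.edges, ¬(lo e ≤ k ∧ k < hi e)) :
    ∀ v ∈ w.support, k < (v:ℕ) := by
  induction w with
  | nil => intro v hv; simp at hv; subst hv; exact hx
  | @cons u v z h p ih =>
    intro a ha
    rw [SimpleGraph.Walk.support_cons, List.mem_cons] at ha
    have hv : k < (v:ℕ) := by
      have := hno s(u,v) (List.mem_cons_self)
      simp at this; omega
    rcases ha with rfl | ha
    · exact hx
    · exact ih hv (fun e he => hno e (List.mem_cons_of_mem _ he)) a ha

lemma nodup_len_le_one {α : Type*} {l : List α} (hnd : l.Nodup) {a : α}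
    (h : ∀ x ∈ l, x = a) : l.length ≤ 1 := by
  match l, hnd with
  | [], _ => simp
  | [x], _ => simp
  | x :: y :: t, hnd =>
    exfalso
    have hx := h x (by simp)
    have hy := h y (by simp)
    subst hx; rw [hy] at hnd; simp at hnd

lemma exists_adj_of_walk {x y : Fin n} (w : T.Walk x y) (hxy : x ≠ y) :
    ∃ z, T.Adj x z ∧ z ∈ w.support := by
  cases w with
  | nil => exact absurd rfl hxy
  | cons h p => exact ⟨_, h, by simp⟩

variable (T) [DecidableRel T.Adj]

/-- edges within the interval [l,r] -/
def E (l r : ℕ) : Finset (Sym2 (Fin n)) :=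
  T.edgeFinset.filter (fun e => l ≤ lo e ∧ hi e ≤ r)

variable {T}

lemma mem_E {l r : ℕ} {e : Sym2 (Fin n)} :
    e ∈ E T l r ↔ e ∈ T.edgeSet ∧ l ≤ lo e ∧ hi e ≤ r := by
  simp [E, Finset.mem_filter, SimpleGraph.mem_edgeFinset, and_assoc]

lemma walk_edges_mem {l r : ℕ} {x y : Fin n} (w : T.Walk x y)
    (hw : ∀ v ∈ w.support, l ≤ (v:ℕ) ∧ (v:ℕ) ≤ r) :
    ∀ e ∈ w.edges, e ∈ E T l r := by
  intro e he
  obtain ⟨a, b, heq, ha, hb⟩ := exists_rep e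
  have hma : a ∈ w.support :=
    SimpleGraph.Walk.fst_mem_support_of_mem_edges w (heq ▸ he)
  have hmb : b ∈ w.support :=
    SimpleGraph.Walk.snd_mem_support_of_mem_edges w (heq ▸ he)
  exact mem_E.mpr ⟨w.edges_subset_edgeSet he, ha ▸ (hw a hma).1, hb ▸ (hw b hmb).2⟩

lemma len_eq_card {l r : ℕ} {e : Sym2 (Fin n)} (h1 : l ≤ lo e) (h2 : hi e ≤ r) :
    hi e - lo e = ((Finset.Ico l r).filter (fun k => lo e ≤ k ∧ k < hi e)).card := by
  have h : (Finset.Ico l r).filter (fun k => lo e ≤ k ∧ k < hi e) = Finset.Ico (lo e) (hi e) := by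
    ext k
    simp only [Finset.mem_filter, Finset.mem_Ico]
    omega
  rw [h, Nat.card_Ico]

lemma sum_len_eq (l r : ℕ) :
    ∑ e ∈ E T l r, (hi e - lo e) =
      ∑ k ∈ Finset.Ico l r, ((E T l r).filter (fun e => lo e ≤ k ∧ k < hi e)).card := by
  have h1 : ∑ e ∈ E T l r, (hi e - lo e) =
      ∑ e ∈ E T l r, ∑ k ∈ Finset.Ico l r, (if lo e ≤ k ∧ k < hi e then 1 else 0) := by
    refine Finset.sum_congr rfl fun e he => ?_
    have hb := (mem_E.mp he).2
    rw [len_eq_card hb.1 hb.2, Finset.card_filter]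
  rw [h1, Finset.sum_comm]
  exact Finset.sum_congr rfl fun k _ => (Finset.card_filter _ _).symm

lemma main_lemma
    (hside : ∀ v : Fin n, (∀ u, T.Adj v u → u < v) ∨ (∀ u, T.Adj v u → v < u))
    (d : ℕ) : ∀ l r : ℕ, r - l = d → r ≤ n - 1 → l < r →
    (∀ u u' : Fin n, l ≤ (u:ℕ) → (u:ℕ) ≤ r → l ≤ (u':ℕ) → (u':ℕ) ≤ r →
      ∃ w : T.Walk u u', ∀ v ∈ w.support, l ≤ (v:ℕ) ∧ (v:ℕ) ≤ r) →
    2 * (r - l) - 1 ≤ ∑ e ∈ E T l r, (hi e - lo e) := by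
  induction d using Nat.strong_induction_on with
  | _ d IH =>
    intro l r hd hr hlr conn
    have hn2 : 2 ≤ n := by omega
    -- every gap has a crossing edge
    have hcross : ∀ k, l ≤ k → k < r → ∃ e ∈ E T l r, lo e ≤ k ∧ k < hi e := by
      intro k hk1 hk2
      have hkn : k < n := by omega
      have hkn' : k + 1 < n := by omega
      obtain ⟨w, hw⟩ := conn ⟨k, hkn⟩ ⟨k+1, hkn'⟩ hk1 (by simp; omega) (by simp; omega) (by simp; omega)
      obtain ⟨e, he, hc⟩ := exists_crossing_edge w k (le_refl k) (by simp)
      exact ⟨e, walk_edges_mem w hw e he, hc⟩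
    by_cases hall : ∀ k ∈ Finset.Ico l r, 2 ≤ ((E T l r).filter (fun e => lo e ≤ k ∧ k < hi e)).card
    · rw [sum_len_eq]
      have h2 : ∑ k ∈ Finset.Ico l r, 2 ≤
          ∑ k ∈ Finset.Ico l r, ((E T l r).filter (fun e => lo e ≤ k ∧ k < hi e)).card :=
        Finset.sum_le_sum hall
      rw [Finset.sum_const, Nat.card_Ico, smul_eq_mul] at h2
      omega
    · push_neg at hall
      obtain ⟨i, hi_mem, hi_lt⟩ := hall
      rw [Finset.mem_Ico] at hi_mem
      obtain ⟨hli, hir⟩ := hi_mem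
      have hone : ((E T l r).filter (fun e => lo e ≤ i ∧ i < hi e)).card = 1 := by
        obtain ⟨e, he, hc⟩ := hcross i hli hir
        have : e ∈ (E T l r).filter (fun e => lo e ≤ i ∧ i < hi e) :=
          Finset.mem_filter.mpr ⟨he, hc⟩
        have := Finset.card_pos.mpr ⟨e, this⟩
        omega
      obtain ⟨e0, hfe0⟩ := Finset.card_eq_one.mp hone
      have he0m : e0 ∈ E T l r ∧ lo e0 ≤ i ∧ i < hi e0 := by
        have : e0 ∈ (E T l r).filter (fun e => lo e ≤ i ∧ i < hi e) := by
          rw [hfe0]; exact Finset.mem_singleton_self e0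
        exact Finset.mem_filter.mp this
      have huniq : ∀ e ∈ E T l r, lo e ≤ i → i < hi e → e = e0 := by
        intro e he h1 h2
        have : e ∈ (E T l r).filter (fun e => lo e ≤ i ∧ i < hi e) :=
          Finset.mem_filter.mpr ⟨he, h1, h2⟩
        rw [hfe0] at this
        exact Finset.mem_singleton.mp this
      -- no-cross path between same-side vertices
      have key : ∀ u u' : Fin n, l ≤ (u:ℕ) → (u:ℕ) ≤ r → l ≤ (u':ℕ) → (u':ℕ) ≤ r →
          (((u:ℕ) ≤ i) ↔ ((u':ℕ) ≤ i)) →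
          ∃ w : T.Walk u u', (∀ v ∈ w.support, l ≤ (v:ℕ) ∧ (v:ℕ) ≤ r) ∧
            (∀ e ∈ w.edges, ¬(lo e ≤ i ∧ i < hi e)) := by
        intro u u' h1 h2 h3 h4 hiff
        obtain ⟨w, hw⟩ := conn u u' h1 h2 h3 h4
        classical
        refine ⟨w.toPath.val, fun v hv => hw v (w.support_toPath_subset hv), ?_⟩
        have hnd : w.toPath.val.edges.Nodup := w.toPath.prop.isTrail.edges_nodup
        have hsub : ∀ v ∈ w.toPath.val.support, l ≤ (v:ℕ) ∧ (v:ℕ) ≤ r :=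
          fun v hv => hw v (w.support_toPath_subset hv)
        have hcp := parity w.toPath.val i
        rw [if_pos hiff] at hcp
        have hle1 : (w.toPath.val.edges.countP (fun e => decide (lo e ≤ i ∧ i < hi e))) ≤ 1 := by
          rw [List.countP_eq_length_filter]
          refine nodup_len_le_one (hnd.filter _) (a := e0) ?_
          intro e he
          rw [List.mem_filter] at he
          have hc : lo e ≤ i ∧ i < hi e := by
            have := he.2; simpa using this
          exact huniq e (walk_edges_mem _ hsub e he.1) hc.1 hc.2
        have hzero : (w.toPath.val.edges.countP (fun e => decide (lo e ≤ i ∧ i < hi e))) = 0 := by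
          omega
        intro e he
        have := List.countP_eq_zero.mp hzero e he
        simpa using this
      -- connectivity of left part
      have connL : ∀ u u' : Fin n, l ≤ (u:ℕ) → (u:ℕ) ≤ i → l ≤ (u':ℕ) → (u':ℕ) ≤ i →
          ∃ w : T.Walk u u', ∀ v ∈ w.support, l ≤ (v:ℕ) ∧ (v:ℕ) ≤ i := by
        intro u u' h1 h2 h3 h4
        obtain ⟨w, hw, hno⟩ := key u u' h1 (by omega) h3 (by omega) (by omega)
        exact ⟨w, fun v hv => ⟨(hw v hv).1, stays_left w i h2 hno v hv⟩⟩
      have connR : ∀ u u' : Fin n, i + 1 ≤ (u:ℕ) → (u:ℕ) ≤ r → i + 1 ≤ (u':ℕ) → (u':ℕ) ≤ r →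
          ∃ w : T.Walk u u', ∀ v ∈ w.support, i + 1 ≤ (v:ℕ) ∧ (v:ℕ) ≤ r := by
        intro u u' h1 h2 h3 h4
        obtain ⟨w, hw, hno⟩ := key u u' (by omega) h2 (by omega) h4 (by omega)
        exact ⟨w, fun v hv => ⟨stays_right w i (by omega) hno v hv, (hw v hv).2⟩⟩
      -- endpoints of e0
      obtain ⟨a, b, hab, hva, hvb⟩ := exists_rep e0
      have hadj : T.Adj a b := by
        have := (mem_E.mp he0m.1).1
        rwa [hab, SimpleGraph.mem_edgeSet] at this
      have hbl : l ≤ lo e0 := (mem_E.mp he0m.1).2.1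
      have hbr : hi e0 ≤ r := (mem_E.mp he0m.1).2.2
      have haltb : a < b := by
        rw [Fin.lt_def, hva, hvb]
        have := he0m.2; omega
      -- lo e0 < i when l < i
      have hlo_lt : l < i → lo e0 < i := by
        intro hl
        by_contra hcon
        have hloi : lo e0 = i := by omega
        have hai : (a:ℕ) = i := by omega
        obtain ⟨w, hw⟩ := connL a ⟨l, by omega⟩ (by omega) (by omega) (by simp) (by simp; omega)
        have hane : a ≠ ⟨l, by omega⟩ := by
          intro h
          have : (a:ℕ) = l := by rw [h]
          omega
        obtain ⟨z, hz, hzs⟩ := exists_adj_of_walk w hane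
        have hzi : (z:ℕ) ≤ i := (hw z hzs).2
        have hzne : z ≠ a := hz.ne'
        have hzlt : z < a := by
          rw [Fin.lt_def, hai]
          rcases Nat.lt_or_ge (z:ℕ) i with h | h
          · exact h
          · exfalso; exact hzne (Fin.ext (by omega))
        rcases hside a with hs | hs
        · exact absurd haltb (not_lt.mpr (le_of_lt (hs b hadj)))
        · exact absurd hzlt (not_lt.mpr (le_of_lt (hs z hz)))
      -- i + 1 < hi e0 when i + 1 < r
      have hhi_gt : i + 1 < r → i + 1 < hi e0 := by
        intro hl
        by_contra hcon
        have hhii : hi e0 = i + 1 := by have := he0m.2; omega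
        have hbi : (b:ℕ) = i + 1 := by omega
        obtain ⟨w, hw⟩ := connR b ⟨r, by omega⟩ (by omega) (by omega) (by simp; omega) (by simp)
        have hbne : b ≠ ⟨r, by omega⟩ := by
          intro h
          have : (b:ℕ) = r := by rw [h]
          omega
        obtain ⟨z, hz, hzs⟩ := exists_adj_of_walk w hbne
        have hzi : i + 1 ≤ (z:ℕ) := (hw z hzs).1
        have hzne : z ≠ b := hz.ne'
        have hzgt : b < z := by
          rw [Fin.lt_def, hbi]
          rcases Nat.lt_or_ge (i+1) (z:ℕ) with h | h
          · exact h
          · exfalso; exact hzne (Fin.ext (by omega))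
        rcases hside b with hs | hs
        · exact absurd hzgt (not_lt.mpr (le_of_lt (hs z hz)))
        · exact absurd haltb (not_lt.mpr (le_of_lt (hs a hadj.symm)))
      -- sum decomposition
      set A := E T l i with hA
      set B := E T (i+1) r with hB
      have hAsub : A ⊆ E T l r := by
        intro e he
        obtain ⟨h1, h2, h3⟩ := mem_E.mp he
        exact mem_E.mpr ⟨h1, h2, by omega⟩
      have hBsub : B ⊆ E T l r := by
        intro e he
        obtain ⟨h1, h2, h3⟩ := mem_E.mp he
        exact mem_E.mpr ⟨h1, by omega, h3⟩
      have he0A : e0 ∉ A := by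
        intro h
        have := (mem_E.mp h).2.2
        have := he0m.2.2
        omega
      have he0B : e0 ∉ B := by
        intro h
        have := (mem_E.mp h).2.1
        have := he0m.2.1
        omega
      have hABdis : Disjoint A B := by
        rw [Finset.disjoint_left]
        intro e heA heB
        have h1 := (mem_E.mp heA).2.2
        have h2 := (mem_E.mp heB).2.1
        have := lo_le_hi e
        omega
      have hUdis : Disjoint (A ∪ B) {e0} := by
        rw [Finset.disjoint_singleton_right]
        simp [he0A, he0B]
      have hUsub : A ∪ B ∪ {e0} ⊆ E T l r := by
        intro e he
        rcases Finset.mem_union.mp he with h | h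
        · rcases Finset.mem_union.mp h with h | h
          · exact hAsub h
          · exact hBsub h
        · rw [Finset.mem_singleton.mp h]; exact he0m.1
      have hsum : ∑ e ∈ A, (hi e - lo e) + ∑ e ∈ B, (hi e - lo e) + (hi e0 - lo e0) ≤
          ∑ e ∈ E T l r, (hi e - lo e) := by
        calc ∑ e ∈ A, (hi e - lo e) + ∑ e ∈ B, (hi e - lo e) + (hi e0 - lo e0)
            = ∑ e ∈ A ∪ B ∪ {e0}, (hi e - lo e) := by
              rw [Finset.sum_union hUdis, Finset.sum_union hABdis, Finset.sum_singleton]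
          _ ≤ ∑ e ∈ E T l r, (hi e - lo e) := Finset.sum_le_sum_of_subset hUsub
      -- apply IH
      have hIHL : l < i → 2 * (i - l) - 1 ≤ ∑ e ∈ A, (hi e - lo e) := by
        intro hl
        exact IH (i - l) (by omega) l i rfl (by omega) hl connL
      have hIHR : i + 1 < r → 2 * (r - (i+1)) - 1 ≤ ∑ e ∈ B, (hi e - lo e) := by
        intro hl
        exact IH (r - (i+1)) (by omega) (i+1) r rfl (by omega) hl connR
      have hcf : lo e0 ≤ i ∧ i < hi e0 := he0m.2
      rcases eq_or_lt_of_le hli with h1 | h1 <;> rcases eq_or_lt_of_le (by omega : i + 1 ≤ r) with h2 | h2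
      · omega
      · have := hIHR h2; have := hhi_gt h2; omega
      · have := hIHL h1; have := hlo_lt h1; omega
      · have := hIHL h1; have := hIHR h2
        have := hlo_lt h1; have := hhi_gt h2
        omega

end OneSidedAux

open OneSidedAux in
theorem one_sided_tree_on_line_weight (n : ℕ) (hn : 2 ≤ n)
    (T : SimpleGraph (Fin n)) [DecidableRel T.Adj] (hT : T.IsTree)
    (hside : ∀ v : Fin n, (∀ u, T.Adj v u → u < v) ∨ (∀ u, T.Adj v u → v < u)) :
    (2 * n - 3 : ℝ) ≤
      ∑ e ∈ T.edgeFinset,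
        Sym2.lift ⟨fun a b : Fin n => |(a : ℝ) - (b : ℝ)|, fun a b => abs_sub_comm _ _⟩ e := by
  classical
  have hconn : T.Connected := hT.isConnected
  have hE : E T 0 (n-1) = T.edgeFinset := by
    apply Finset.filter_true_of_mem
    intro e _
    refine ⟨Nat.zero_le _, ?_⟩
    obtain ⟨a, b, _, _, hvb⟩ := exists_rep e
    have := b.isLt
    omega
  have conn : ∀ u u' : Fin n, 0 ≤ (u:ℕ) → (u:ℕ) ≤ n-1 → 0 ≤ (u':ℕ) → (u':ℕ) ≤ n-1 →
      ∃ w : T.Walk u u', ∀ v ∈ w.support, 0 ≤ (v:ℕ) ∧ (v:ℕ) ≤ n-1 := by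
    intro u u' _ _ _ _
    obtain ⟨w⟩ := hconn.preconnected u u'
    exact ⟨w, fun v _ => ⟨Nat.zero_le _, by have := v.isLt; omega⟩⟩
  have hmain := main_lemma hside (n-1-0) 0 (n-1) rfl (le_refl _) (by omega) conn
  rw [hE] at hmain
  have hcast : ∑ e ∈ T.edgeFinset,
      Sym2.lift ⟨fun a b : Fin n => |(a : ℝ) - (b : ℝ)|, fun a b => abs_sub_comm _ _⟩ e
      = ((∑ e ∈ T.edgeFinset, (hi e - lo e) : ℕ) : ℝ) := by
    rw [Nat.cast_sum]
    refine Finset.sum_congr rfl fun e _ => ?_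
    induction e using Sym2.ind with
    | _ a b =>
      rw [Sym2.lift_mk]
      simp only [lo_mk, hi_mk]
      rcases le_total (a:ℕ) (b:ℕ) with h | h
      · rw [max_eq_right h, min_eq_left h, Nat.cast_sub h, abs_sub_comm,
          abs_of_nonneg (sub_nonneg.mpr (by exact_mod_cast h))]
      · rw [max_eq_left h, min_eq_right h, Nat.cast_sub h,
          abs_of_nonneg (sub_nonneg.mpr (by exact_mod_cast h))]
  rw [hcast]
  have h1 : (2*n-3 : ℕ) ≤ ∑ e ∈ T.edgeFinset, (hi e - lo e) := by omega
  calc (2 * n - 3 : ℝ) = ((2*n-3 : ℕ) : ℝ) := by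
        rw [Nat.cast_sub (by omega)]; push_cast; ring
    _ ≤ _ := Nat.cast_le.mpr h1
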